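/- Fix q ∈ ℂ with Re q ≤ 0 and for n ∈ ℕ define |g|_n² = ∫_ℝ (1+|x|²)^n |g(x)|² dx. Then for every f ∈ L²(ℝ, ℂ) and every n ∈ ℕ one has lim_{t→∞} ∫_ℝ (1+|x|²)^n |e^{qt − x²t} f(x)|² dx = 0; that is, the multiplication semigroup (T̂(t)f)(x) = e^{qt − x²t} f(x) is strongly stable on the projective limit Ĥ of the weighted L² spaces {f ∈ L²(ℝ) : |f|_n < ∞ for all n}. -/

import Mathlib

open Filter Topology MeasureTheory
open scoped ENNReal

/-- Proposition 5.4 (iii): If `Re q ≤ 0` then the Fourier-transformed scaled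
Gaussian semigroup `(T̂(t)f)(x) = e^{qt - x²t} f(x)` is strongly stable on the projective limit
of the weighted `L²` spaces: for every `f ∈ L²(ℝ, ℂ)` and every `n ∈ ℕ` one has
`∫ (1+|x|²)^n |e^{qt - x²t} f(x)|² dx → 0` as `t → ∞`. -/
theorem statement19 (q : ℂ) (hq : q.re ≤ 0) (f : ℝ → ℂ)
    (hf : MeasureTheory.MemLp f 2 (MeasureTheory.volume : MeasureTheory.Measure ℝ)) :
    ∀ n : ℕ,
      Tendsto (fun t : ℝ => ∫⁻ x : ℝ, ENNReal.ofReal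
          ((1 + |x| ^ 2) ^ n * ‖Complex.exp (q * t - (x : ℂ) ^ 2 * t) * f x‖ ^ 2))
        atTop (nhds 0) := by
  intro n
  -- measurable representative
  obtain ⟨g, hg_sm, hfg⟩ := hf.1
  have hg_meas : Measurable g := hg_sm.measurable
  -- norm computation
  have hre : ∀ (t x : ℝ), (q * t - (x : ℂ) ^ 2 * t).re = (q.re - x ^ 2) * t := by
    intro t x
    simp [Complex.sub_re, Complex.mul_re, Complex.ofReal_re, Complex.ofReal_im, pow_two]
    ring
  have hnorm : ∀ (t x : ℝ) (h : ℝ → ℂ),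
      ‖Complex.exp (q * t - (x : ℂ) ^ 2 * t) * h x‖ ^ 2
        = Real.exp (2 * ((q.re - x ^ 2) * t)) * ‖h x‖ ^ 2 := by
    intro t x h
    rw [norm_mul, mul_pow, Complex.norm_exp, hre,
      ← Real.exp_nat_mul]
    norm_num
  -- replace f by g in each lintegral
  have hcongr : ∀ t : ℝ,
      (∫⁻ x : ℝ, ENNReal.ofReal
          ((1 + |x| ^ 2) ^ n * ‖Complex.exp (q * t - (x : ℂ) ^ 2 * t) * f x‖ ^ 2))
        = ∫⁻ x : ℝ, ENNReal.ofReal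
          ((1 + |x| ^ 2) ^ n * ‖Complex.exp (q * t - (x : ℂ) ^ 2 * t) * g x‖ ^ 2) := by
    intro t
    refine lintegral_congr_ae ?_
    filter_upwards [hfg] with x hx
    rw [hx]
  have h0 : (0 : ℝ≥0∞) = ∫⁻ (_ : ℝ), (0 : ℝ≥0∞) := by simp
  refine Tendsto.congr (fun t => (hcongr t).symm) ?_
  rw [h0]
  refine tendsto_lintegral_filter_of_dominated_convergence
      (fun x => ENNReal.ofReal (‖g x‖ ^ 2)) ?_ ?_ ?_ ?_
  · -- measurability
    refine Eventually.of_forall fun t => ?_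
    apply ENNReal.measurable_ofReal.comp
    apply Measurable.mul
    · exact (measurable_const.add ((measurable_norm.pow_const 2))).pow_const n |>.comp measurable_id |>.mono le_rfl le_rfl
    · exact (measurable_norm.comp ((Complex.measurable_exp.comp (by fun_prop)).mul hg_meas)).pow_const 2
  · -- bound: for t ≥ n
    filter_upwards [eventually_ge_atTop ((n : ℝ))] with t ht
    refine Eventually.of_forall fun x => ?_
    rw [hnorm]
    apply ENNReal.ofReal_le_ofReal
    have hx2 : (0:ℝ) ≤ x ^ 2 := sq_nonneg x
    have habs : |x| ^ 2 = x ^ 2 := sq_abs x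
    have key : (1 + x ^ 2) ^ n * Real.exp (2 * ((q.re - x ^ 2) * t)) ≤ 1 := by
      have h1 : (1 + x ^ 2) ^ n ≤ Real.exp (n * x ^ 2) := by
        calc (1 + x ^ 2) ^ n ≤ (Real.exp (x ^ 2)) ^ n := by
              apply pow_le_pow_left₀ (by positivity)
              linarith [Real.add_one_le_exp (x ^ 2)]
          _ = Real.exp (n * x ^ 2) := by rw [← Real.exp_nat_mul]
      have h2 : Real.exp (2 * ((q.re - x ^ 2) * t)) ≤ Real.exp (-(2 * t) * x ^ 2) := by
        apply Real.exp_le_exp.mpr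
        have hqt : q.re * t ≤ 0 := mul_nonpos_of_nonpos_of_nonneg hq
          (le_trans (Nat.cast_nonneg n) ht)
        nlinarith
      calc (1 + x ^ 2) ^ n * Real.exp (2 * ((q.re - x ^ 2) * t))
          ≤ Real.exp (n * x ^ 2) * Real.exp (-(2 * t) * x ^ 2) := by
            apply mul_le_mul h1 h2 (Real.exp_pos _).le (Real.exp_pos _).le
        _ = Real.exp ((n - 2 * t) * x ^ 2) := by rw [← Real.exp_add]; ring_nf
        _ ≤ 1 := by
            apply Real.exp_le_one_iff.mpr
            apply mul_nonpos_of_nonpos_of_nonneg _ hx2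
            linarith
    calc (1 + |x| ^ 2) ^ n * (Real.exp (2 * ((q.re - x ^ 2) * t)) * ‖g x‖ ^ 2)
        = ((1 + x ^ 2) ^ n * Real.exp (2 * ((q.re - x ^ 2) * t))) * ‖g x‖ ^ 2 := by
          rw [habs]; ring
      _ ≤ 1 * ‖g x‖ ^ 2 := by
          apply mul_le_mul_of_nonneg_right key (by positivity)
      _ = ‖g x‖ ^ 2 := one_mul _
  · -- finiteness of the bound
    have := lintegral_rpow_enorm_lt_top_of_eLpNorm_lt_top (f := g) (p := 2)
      (by norm_num) (by norm_num) ((eLpNorm_congr_ae hfg ▸ hf.2))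
    have heq : (∫⁻ x : ℝ, ENNReal.ofReal (‖g x‖ ^ 2))
        = ∫⁻ x : ℝ, (‖g x‖₊ : ℝ≥0∞) ^ ((2 : ℝ≥0∞).toReal) := by
      refine lintegral_congr fun x => ?_
      rw [ENNReal.toReal_ofNat, ENNReal.rpow_two, ENNReal.ofReal_pow (norm_nonneg _),
        ofReal_norm, enorm_eq_nnnorm]
    rw [heq]
    exact this.ne
  · -- pointwise limit
    have hae : ∀ᵐ x : ℝ ∂(volume : Measure ℝ), x ≠ 0 := by
      have hs : ({x : ℝ | ¬ x ≠ 0} : Set ℝ) = {0} := by ext x; simp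
      rw [ae_iff, hs]
      exact measure_singleton 0
    filter_upwards [hae] with x hx
    simp only [hnorm]
    have hcoef : 2 * (q.re - x ^ 2) < 0 := by
      have hx2 : 0 < x ^ 2 := by positivity
      nlinarith
    have hlim : Tendsto (fun t : ℝ => Real.exp (2 * ((q.re - x ^ 2) * t))) atTop (nhds 0) := by
      apply Real.tendsto_exp_atBot.comp
      have : ∀ t : ℝ, 2 * ((q.re - x ^ 2) * t) = (2 * (q.re - x ^ 2)) * t := fun t => by ring
      simp only [this]
      exact Filter.Tendsto.const_mul_atTop_of_neg hcoef tendsto_id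
    have : Tendsto (fun t : ℝ =>
        (1 + |x| ^ 2) ^ n * (Real.exp (2 * ((q.re - x ^ 2) * t)) * ‖g x‖ ^ 2))
        atTop (nhds 0) := by
      have := (hlim.mul_const (‖g x‖ ^ 2)).const_mul ((1 + |x| ^ 2) ^ n)
      simpa using this
    have h0' : (0 : ℝ≥0∞) = ENNReal.ofReal 0 := by simp
    rw [h0']
    exact (ENNReal.continuous_ofReal.tendsto 0).comp this
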